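/- Under the same Markov dynamics (unsatisfied vertices pick each color with probability ≥ γ, satisfied vertices frozen), suppose the assignment x(0) is not C-satisfying and the directed graph (V,C) is strongly connected with N = |V|. Let k be an unsatisfied vertex and j a vertex with (j,k) ∈ C and x_j(0) = x_k(0), and let d be any color. Then with probability at least γ^{N^3}, within at most N^2 steps the process reaches an assignment equal to x(0) except that vertex j has color d. -/

import Mathlib

open MeasureTheory

/-- A vertex `i` is unsatisfied under assignment `x` (w.r.t. sensing edges `C`)
iff some sensed in-neighbor shares its color. -/
def CFLUnsat {V D : Type*} (C : Set (V × V)) (x : V → D) (i : V) : Prop :=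
  ∃ j, (j, i) ∈ C ∧ x j = x i

/-- From reflexive-transitive closure, extract an injective (simple) path. -/
lemma exists_injective_path {V : Type*} {r : V → V → Prop} {a b : V}
    (h : Relation.ReflTransGen r a b) :
    ∃ (n : ℕ) (w : ℕ → V), w 0 = a ∧ w n = b ∧ (∀ i < n, r (w i) (w (i+1))) ∧
      ∀ s, s ≤ n → ∀ t, t ≤ n → w s = w t → s = t := by
  classical
  -- first, a walk
  have hwalk : ∃ (n : ℕ) (w : ℕ → V), w 0 = a ∧ w n = b ∧ ∀ i < n, r (w i) (w (i+1)) := by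
    induction h with
    | refl => exact ⟨0, fun _ => a, rfl, rfl, by omega⟩
    | @tail b' c' hab hr ih =>
      obtain ⟨n, w, hw0, hwn, he⟩ := ih
      refine ⟨n+1, fun i => if i ≤ n then w i else c', ?_, ?_, ?_⟩
      · simp [hw0]
      · simp only [if_neg (by omega : ¬ n + 1 ≤ n)]
      intro i hi
      rcases Nat.lt_or_ge i n with h1 | h1
      · simp only [if_pos (by omega : i ≤ n), if_pos (by omega : i + 1 ≤ n)]
        exact he i h1
      · have h2 : i = n := by omega
        simp only [if_pos (by omega : i ≤ n), if_neg (by omega : ¬ i + 1 ≤ n)]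
        rw [h2, hwn]; exact hr
  set P : ℕ → Prop := fun n => ∃ (w : ℕ → V), w 0 = a ∧ w n = b ∧ ∀ i < n, r (w i) (w (i+1))
    with hP
  have hex : ∃ n, P n := by obtain ⟨n, w, h1, h2, h3⟩ := hwalk; exact ⟨n, w, h1, h2, h3⟩
  obtain ⟨w, hw0, hwn, he⟩ := Nat.find_spec hex
  refine ⟨Nat.find hex, w, hw0, hwn, he, ?_⟩
  by_contra hcon
  push_neg at hcon
  obtain ⟨s, hs, t, ht, hst, hne⟩ := hcon
  -- wlog s < t
  rcases Nat.lt_or_ge s t with hlt | hge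
  case _ =>
    -- splice out the loop from s to t
    have hkey : P (Nat.find hex - (t - s)) := by
      refine ⟨fun i => if i < s then w i else w (i + (t - s)), ?_, ?_, ?_⟩
      · rcases Nat.eq_zero_or_pos s with h0 | h0
        · simp only [if_neg (by omega : ¬ (0:ℕ) < s)]
          rw [h0] at hst; rw [← hw0, h0]
          simpa using hst.symm
        · simp [h0, hw0]
      · have h1 : ¬ (Nat.find hex - (t - s) < s) := by omega
        simp only [if_neg h1]
        have : Nat.find hex - (t - s) + (t - s) = Nat.find hex := by omega
        rw [this, hwn]
      · intro i hi
        rcases Nat.lt_or_ge (i+1) s with h1 | h1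
        · simp only [if_pos (by omega : i < s), if_pos h1]
          exact he i (by omega)
        · rcases Nat.lt_or_ge i s with h2 | h2
          · -- i + 1 = s
            have h3 : i + 1 = s := by omega
            simp only [if_pos h2, if_neg (by omega : ¬ i + 1 < s)]
            have : i + 1 + (t - s) = t := by omega
            rw [this, ← hst, ← h3]
            exact he i (by omega)
          · simp only [if_neg (by omega : ¬ i < s), if_neg (by omega : ¬ i + 1 < s)]
            have : i + 1 + (t - s) = i + (t - s) + 1 := by omega
            rw [this]
            exact he _ (by omega)
    have := Nat.find_min hex (m := Nat.find hex - (t - s)) (by omega)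
    exact this hkey
  case _ =>
    have hlt : t < s := by omega
    have hkey : P (Nat.find hex - (s - t)) := by
      refine ⟨fun i => if i < t then w i else w (i + (s - t)), ?_, ?_, ?_⟩
      · rcases Nat.eq_zero_or_pos t with h0 | h0
        · simp only [if_neg (by omega : ¬ (0:ℕ) < t)]
          rw [h0] at hst; rw [← hw0, h0]
          simpa using hst
        · simp [h0, hw0]
      · have h1 : ¬ (Nat.find hex - (s - t) < t) := by omega
        simp only [if_neg h1]
        have : Nat.find hex - (s - t) + (s - t) = Nat.find hex := by omega
        rw [this, hwn]
      · intro i hi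
        rcases Nat.lt_or_ge (i+1) t with h1 | h1
        · simp only [if_pos (by omega : i < t), if_pos h1]
          exact he i (by omega)
        · rcases Nat.lt_or_ge i t with h2 | h2
          · have h3 : i + 1 = t := by omega
            simp only [if_pos h2, if_neg (by omega : ¬ i + 1 < t)]
            have : i + 1 + (s - t) = s := by omega
            rw [this, hst, ← h3]
            exact he i (by omega)
          · simp only [if_neg (by omega : ¬ i < t), if_neg (by omega : ¬ i + 1 < t)]
            have : i + 1 + (s - t) = i + (s - t) + 1 := by omega
            rw [this]
            exact he _ (by omega)
    have := Nat.find_min hex (m := Nat.find hex - (s - t)) (by omega)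
    exact this hkey



section Traj
variable {V D : Type*} [DecidableEq V]

/-- Color value at wave `q`, path position `s`. -/
def fcol (x0 : V → D) (w : ℕ → V) (m : ℕ) (q s : ℕ) : D :=
  if s + q ≤ m then x0 (w (s+q)) else x0 (w (s+q-m))

/-- The scheduled trajectory: `m` waves of `m+1` single-vertex updates each,
finally setting `w m` to `d`. -/
def traj (x0 : V → D) (w : ℕ → V) (m : ℕ) (d : D) : ℕ → V → D
  | 0 => x0
  | (t+1) => if t < m*(m+1)
      then Function.update (traj x0 w m d t) (w (t % (m+1)))
        (if t = m*(m+1) - 1 then d else fcol x0 w m (t/(m+1)+1) (t % (m+1)))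
      else traj x0 w m d t

variable {C : Set (V × V)} {x0 : V → D} {w : ℕ → V} {m : ℕ} {d : D}

lemma fcol_zero (s : ℕ) (hs : s ≤ m) : fcol x0 w m 0 s = x0 (w s) := by
  simp [fcol, hs]

lemma fcol_m (s : ℕ) (hs : s ≤ m) (hm : 1 ≤ m) (hcyc : x0 (w m) = x0 (w 0)) :
    fcol x0 w m m s = x0 (w s) := by
  rcases Nat.eq_zero_or_pos s with h | h
  · subst h
    simpa [fcol] using hcyc
  · have h1 : ¬ (s + m ≤ m) := by omega
    have h2 : s + m - m = s := by omega
    simp only [fcol, if_neg h1, h2]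

lemma fcol_shift (q s : ℕ) : fcol x0 w m (q+1) s = fcol x0 w m q (s+1) := by
  have h : s + (q+1) = (s+1) + q := by omega
  simp only [fcol, h]

lemma fcol_last (q : ℕ) (hq : q ≤ m) (hcyc : x0 (w m) = x0 (w 0)) :
    fcol x0 w m q m = fcol x0 w m q 0 := by
  rcases Nat.eq_zero_or_pos q with h | h
  · subst h; simpa [fcol] using hcyc
  · have h1 : ¬ (m + q ≤ m) := by omega
    have h2 : m + q - m = q := by omega
    have h3 : 0 + q = q := by omega
    simp only [fcol, if_neg h1, h2, h3]
    rw [if_pos hq]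

variable (hm : 1 ≤ m)
  (hinj : ∀ s, s ≤ m → ∀ t, t ≤ m → w s = w t → s = t)
  (hcyc : x0 (w m) = x0 (w 0))

include hm hinj hcyc in
/-- Invariant: description of the trajectory at every time `t < m(m+1)`. -/
lemma traj_spec : ∀ t, t < m*(m+1) →
    (∀ v, (∀ s, s ≤ m → w s ≠ v) → traj x0 w m d t v = x0 v) ∧
    (∀ s, s ≤ m → traj x0 w m d t (w s) =
       if s < t % (m+1) then fcol x0 w m (t/(m+1)+1) s else fcol x0 w m (t/(m+1)) s) := by
  intro t
  induction t with
  | zero =>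
    intro _
    constructor
    · intro v _; rfl
    · intro s hs
      simp only [Nat.zero_mod, Nat.zero_div, Nat.not_lt_zero, if_neg (by omega : ¬ s < 0)]
      exact (fcol_zero s hs).symm
  | succ t ih =>
    intro ht1
    have ht : t < m*(m+1) := by omega
    obtain ⟨ih1, ih2⟩ := ih ht
    set p := t % (m+1) with hpdef
    set q := t / (m+1) with hqdef
    have hp : p < m + 1 := Nat.mod_lt _ (by omega)
    have hq : q < m := (Nat.div_lt_iff_lt_mul (by omega)).mpr ht
    have hne : t ≠ m*(m+1) - 1 := by omega
    have htt : traj x0 w m d (t+1)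
        = Function.update (traj x0 w m d t) (w p) (fcol x0 w m (q+1) p) := by
      simp only [traj, if_pos ht, if_neg hne]
      rfl
    have hdm : t = q * (m+1) + p := by
      have h0 := Nat.div_add_mod t (m+1)
      have hc := Nat.mul_comm (m+1) (t / (m+1))
      rw [hpdef, hqdef]
      omega
    -- div/mod of t+1
    have hsucc : ((t+1) % (m+1) = if p < m then p + 1 else 0)
        ∧ ((t+1) / (m+1) = if p < m then q else q + 1) := by
      by_cases hpm : p < m
      · have h1 : t + 1 = (p+1) + q * (m+1) := by omega
        rw [h1]
        simp only [if_pos hpm]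
        constructor
        · rw [Nat.add_mul_mod_self_right]
          exact Nat.mod_eq_of_lt (by omega)
        · rw [Nat.add_mul_div_right _ _ (by omega : 0 < m+1),
            Nat.div_eq_of_lt (by omega)]
          omega
      · have hpm' : p = m := by omega
        have h1 : t + 1 = (q+1) * (m+1) := by
          have : (q+1) * (m+1) = q * (m+1) + (m+1) := by ring
          omega
        rw [h1]
        simp only [if_neg hpm]
        exact ⟨Nat.mul_mod_left _ _, Nat.mul_div_cancel _ (by omega)⟩
      
    constructor
    · intro v hv
      rw [htt, Function.update_of_ne (Ne.symm (hv p (by omega))), ih1 v hv]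
    · intro s hs
      rw [htt, hsucc.1, hsucc.2]
      by_cases hsp : s = p
      · rw [hsp, Function.update_self]
        by_cases hpm : p < m
        · rw [if_pos hpm, if_pos hpm, if_pos (by omega : p < p + 1)]
        · rw [if_neg hpm, if_neg hpm, if_neg (by omega : ¬ p < 0)]
      · rw [Function.update_of_ne (fun hvv => hsp (hinj s hs p (by omega) hvv)), ih2 s hs]
        by_cases hpm : p < m
        · rw [if_pos hpm, if_pos hpm]
          by_cases h2 : s < p
          · rw [if_pos h2, if_pos (by omega : s < p + 1)]
          · rw [if_neg h2, if_neg (by omega : ¬ s < p + 1)]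
        · have hpm' : p = m := by omega
          rw [if_neg hpm, if_neg hpm, if_pos (by omega : s < p), if_neg (by omega : ¬ s < 0)]


variable {C : Set (V × V)}

include hm hinj hcyc in
lemma traj_step (hpath : ∀ i < m, (w i, w (i+1)) ∈ C) (hback : (w m, w 0) ∈ C)
    (t : ℕ) (ht : t < m*(m+1)) :
    ∀ i, ¬ CFLUnsat C (traj x0 w m d t) i → traj x0 w m d (t+1) i = traj x0 w m d t i := by
  intro i hi
  set p := t % (m + 1) with hpdef
  set q := t / (m + 1) with hqdef
  have hp : p < m + 1 := Nat.mod_lt _ (by omega)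
  have hq : q < m := (Nat.div_lt_iff_lt_mul (by omega)).mpr ht
  obtain ⟨spec1, spec2⟩ := traj_spec hm hinj hcyc (d := d) t ht
  rw [← hpdef, ← hqdef] at spec2
  by_cases hip : i = w p
  · exfalso
    apply hi
    rw [hip]
    rcases Nat.eq_zero_or_pos p with hp0 | hp0
    · rw [hp0] at spec2
      refine ⟨w m, by rwa [hp0], ?_⟩
      rw [hp0, spec2 m le_rfl, spec2 0 (by omega), if_neg (by omega : ¬ m < 0),
        if_neg (by omega : ¬ (0:ℕ) < 0)]
      exact fcol_last q (by omega) hcyc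
    · refine ⟨w (p-1), ?_, ?_⟩
      · have h2 := hpath (p-1) (by omega)
        rwa [(by omega : p - 1 + 1 = p)] at h2
      · rw [spec2 (p-1) (by omega), spec2 p (by omega), if_pos (by omega : p - 1 < p),
          if_neg (by omega : ¬ p < p)]
        rw [fcol_shift, (by omega : p - 1 + 1 = p)]
  · simp only [traj, if_pos ht]
    rw [Function.update_of_ne hip]

include hm hinj hcyc in
lemma traj_final : traj x0 w m d (m*(m+1)) = Function.update x0 (w m) d := by
  have hT : 2 ≤ m*(m+1) := by
    have : 1 * 2 ≤ m * (m+1) := Nat.mul_le_mul hm (by omega)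
    omega
  set t := m*(m+1) - 1 with htdef
  have ht1 : m*(m+1) = t + 1 := by omega
  have hprod : ((m-1)+1)*(m+1) = (m-1)*(m+1) + (m+1) := by ring
  have hdm : t = (m-1)*(m+1) + m := by
    have e1 : (m-1)+1 = m := by omega
    rw [e1] at hprod
    omega
  have hmod : t % (m+1) = m := by
    rw [hdm, Nat.mul_add_mod']
    exact Nat.mod_eq_of_lt (by omega)
  have hdiv : t / (m+1) = m - 1 := by
    rw [hdm, Nat.add_comm, Nat.add_mul_div_right _ _ (by omega : 0 < m+1),
      Nat.div_eq_of_lt (by omega)]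
    omega
  have hlt : t < m*(m+1) := by omega
  have hteq : t = m*(m+1) - 1 := htdef
  have htt : traj x0 w m d (m*(m+1)) = Function.update (traj x0 w m d t) (w m) d := by
    rw [ht1]
    simp only [traj, if_pos hlt, if_pos hteq, hmod, if_true, eq_self_iff_true]
  obtain ⟨spec1, spec2⟩ := traj_spec hm hinj hcyc (d := d) t hlt
  funext v
  rw [htt]
  by_cases hv : ∃ s, s ≤ m ∧ w s = v
  · obtain ⟨s, hs, rfl⟩ := hv
    by_cases hsm : s = m
    · rw [hsm, Function.update_self, Function.update_self]
    · have hne : w s ≠ w m := fun h => hsm (hinj s hs m le_rfl h)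
      rw [Function.update_of_ne hne, Function.update_of_ne hne, spec2 s hs, hmod, hdiv,
        if_pos (by omega : s < m), (by omega : m - 1 + 1 = m)]
      exact fcol_m s hs hm hcyc
  · push_neg at hv
    rw [Function.update_of_ne (Ne.symm (hv m le_rfl)), Function.update_of_ne
      (Ne.symm (hv m le_rfl)), spec1 v hv]

end Traj

open MeasureTheory in
lemma prob_chain_aux {V D : Type*} [Fintype V]
    (C : Set (V × V)) {Ω : Type*} [MeasurableSpace Ω]
    (μ : Measure Ω) [IsProbabilityMeasure μ]
    (X : ℕ → Ω → V → D) (γ : ℝ) (hγ : γ ∈ Set.Ioc (0 : ℝ) 1)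
    (hstep : ∀ (t : ℕ) (h : ℕ → V → D),
      (∀ i : V, ¬ CFLUnsat C (h t) i → h (t + 1) i = h t i) →
      γ ^ (Nat.card {i : V // CFLUnsat C (h t) i}) * (μ {ω | ∀ s ≤ t, X s ω = h s}).toReal
        ≤ (μ {ω | ∀ s ≤ t + 1, X s ω = h s}).toReal)
    (h : ℕ → V → D) (T : ℕ)
    (hleg : ∀ t < T, ∀ i, ¬ CFLUnsat C (h t) i → h (t+1) i = h t i) :
    ∀ t, t ≤ T → γ ^ (Fintype.card V * t) * (μ {ω | X 0 ω = h 0}).toReal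
      ≤ (μ {ω | ∀ s ≤ t, X s ω = h s}).toReal := by
  intro t
  induction t with
  | zero =>
    intro _
    have hset : {ω : Ω | ∀ s ≤ 0, X s ω = h s} = {ω | X 0 ω = h 0} := by
      ext ω
      simp [Nat.le_zero]
    rw [hset]
    simp
  | succ t ih =>
    intro ht1
    have hU : Nat.card {i : V // CFLUnsat C (h t) i} ≤ Fintype.card V := by
      have h1 := Finite.card_subtype_le (fun i : V => CFLUnsat C (h t) i)
      have h2 : Nat.card V = Fintype.card V := Nat.card_eq_fintype_card
      omega
    have key := hstep t h (hleg t (by omega))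
    calc γ ^ (Fintype.card V * (t+1)) * (μ {ω | X 0 ω = h 0}).toReal
        = γ ^ (Fintype.card V) * (γ ^ (Fintype.card V * t) * (μ {ω | X 0 ω = h 0}).toReal) := by
          rw [← mul_assoc, ← pow_add]
          congr 2
          ring
      _ ≤ γ ^ (Fintype.card V) * (μ {ω | ∀ s ≤ t, X s ω = h s}).toReal := by
          exact mul_le_mul_of_nonneg_left (ih (by omega)) (pow_nonneg hγ.1.le _)
      _ ≤ γ ^ (Nat.card {i : V // CFLUnsat C (h t) i})
            * (μ {ω | ∀ s ≤ t, X s ω = h s}).toReal := by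
          exact mul_le_mul_of_nonneg_right
            (pow_le_pow_of_le_one hγ.1.le hγ.2 hU) ENNReal.toReal_nonneg
      _ ≤ (μ {ω | ∀ s ≤ t + 1, X s ω = h s}).toReal := key


/-- Lemma 2: Under CFL dynamics on a strongly connected sensing graph,
if `x0` is not `C`-satisfying, `k` is unsatisfied, `(j,k) ∈ C` with `x0 j = x0 k`,
and `d` is any color, then with probability at least `γ^(N^3)`, within at most `N^2`
steps the chain reaches the assignment equal to `x0` except vertex `j` has color `d`. -/
theorem recolor_single_vertex_prob {V D : Type*} [Fintype V] [Fintype D] [DecidableEq V]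
    (C : Set (V × V)) {Ω : Type*} [MeasurableSpace Ω]
    (μ : Measure Ω) [IsProbabilityMeasure μ]
    (X : ℕ → Ω → V → D) (γ : ℝ) (hγ : γ ∈ Set.Ioc (0 : ℝ) 1)
    (hstep : ∀ (t : ℕ) (h : ℕ → V → D),
      (∀ i : V, ¬ CFLUnsat C (h t) i → h (t + 1) i = h t i) →
      γ ^ (Nat.card {i : V // CFLUnsat C (h t) i}) * (μ {ω | ∀ s ≤ t, X s ω = h s}).toReal
        ≤ (μ {ω | ∀ s ≤ t + 1, X s ω = h s}).toReal)
    (hconn : ∀ u v : V, u ≠ v → Relation.ReflTransGen (fun p q => (p, q) ∈ C) u v)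
    (x0 : V → D) (hx0 : ∃ i, CFLUnsat C x0 i)
    (k j : V) (hk : CFLUnsat C x0 k) (hjk : (j, k) ∈ C) (hcol : x0 j = x0 k)
    (d : D) :
    ∃ t ≤ (Fintype.card V) ^ 2,
      γ ^ ((Fintype.card V) ^ 3) * (μ {ω | X 0 ω = x0}).toReal
        ≤ (μ ({ω | X t ω = Function.update x0 j d} ∩ {ω | X 0 ω = x0})).toReal := by
  classical
  set N := Fintype.card V with hN
  have hN1 : 1 ≤ N := Fintype.card_pos_iff.mpr ⟨k⟩
  have hμ0 : (0:ℝ) ≤ (μ {ω | X 0 ω = x0}).toReal := ENNReal.toReal_nonneg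
  by_cases hjk' : j = k
  · -- one step suffices: j is unsatisfied at x0 (self-loop)
    subst hjk'
    set h : ℕ → V → D := fun t => if t = 0 then x0 else Function.update x0 j d with hh
    have hleg : ∀ t < 1, ∀ i, ¬ CFLUnsat C (h t) i → h (t+1) i = h t i := by
      intro t ht i hi
      interval_cases t
      by_cases hij : i = j
      · exfalso
        exact hi ⟨j, by rw [hij]; exact hjk, by rw [hij]⟩
      · simp only [hh, if_neg (by omega : (1:ℕ) ≠ 0), if_pos rfl]
        rw [Function.update_of_ne hij]
    have hb := prob_chain_aux C μ X γ hγ hstep h 1 hleg 1 le_rfl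
    refine ⟨1, Nat.one_le_pow _ _ (by omega), ?_⟩
    have hsub : {ω : Ω | ∀ s ≤ 1, X s ω = h s}
        ⊆ {ω | X 1 ω = Function.update x0 j d} ∩ {ω | X 0 ω = x0} := by
      intro ω hω
      exact ⟨by simpa [hh] using hω 1 le_rfl, by simpa [hh] using hω 0 (by omega)⟩
    have hmono := ENNReal.toReal_mono (measure_ne_top μ _) (measure_mono hsub)
    have hfirst : γ ^ (N ^ 3) * (μ {ω | X 0 ω = x0}).toReal
        ≤ γ ^ (N * 1) * (μ {ω | X 0 ω = x0}).toReal := by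
      refine mul_le_mul_of_nonneg_right (pow_le_pow_of_le_one hγ.1.le hγ.2 ?_) hμ0
      have h1 : N * 1 * 1 ≤ N * N * N := Nat.mul_le_mul (Nat.mul_le_mul le_rfl hN1) hN1
      have h2 : N * N * N = N ^ 3 := by ring
      omega
    have h0 : h 0 = x0 := by simp [hh]
    rw [h0] at hb
    exact le_trans hfirst (le_trans hb hmono)
  · -- extract a simple path from k to j
    obtain ⟨m, w, hw0, hwm, hpath, hinj⟩ :=
      exists_injective_path (hconn k j (Ne.symm hjk'))
    have hm : 1 ≤ m := by
      rcases Nat.eq_zero_or_pos m with h0 | h0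
      · exfalso; apply hjk'; rw [← hwm, h0, hw0]
      · exact h0
    have hcyc : x0 (w m) = x0 (w 0) := by rw [hwm, hw0]; exact hcol
    have hback : (w m, w 0) ∈ C := by rw [hwm, hw0]; exact hjk
    -- m + 1 ≤ N
    have hmN : m + 1 ≤ N := by
      have hfi : Function.Injective (fun i : Fin (m+1) => w i) := by
        intro a b hab
        exact Fin.ext (hinj a (by omega) b (by omega) hab)
      simpa using Fintype.card_le_of_injective _ hfi
    set T := m * (m+1) with hT
    have hTN : T ≤ N ^ 2 := by
      have h1 : m * (m+1) ≤ N * N := Nat.mul_le_mul (by omega) hmN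
      have h2 : N * N = N ^ 2 := by ring
      omega
    have hleg : ∀ t < T, ∀ i, ¬ CFLUnsat C (traj x0 w m d t) i →
        traj x0 w m d (t+1) i = traj x0 w m d t i := by
      intro t ht
      exact traj_step hm hinj hcyc hpath hback t ht
    have hb := prob_chain_aux C μ X γ hγ hstep (traj x0 w m d) T hleg T le_rfl
    refine ⟨T, hTN, ?_⟩
    have h0 : traj x0 w m d 0 = x0 := rfl
    have hfin : traj x0 w m d T = Function.update x0 j d := by
      rw [← hwm]
      exact traj_final hm hinj hcyc
    have hsub : {ω : Ω | ∀ s ≤ T, X s ω = traj x0 w m d s}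
        ⊆ {ω | X T ω = Function.update x0 j d} ∩ {ω | X 0 ω = x0} := by
      intro ω hω
      refine ⟨?_, ?_⟩
      · have := hω T le_rfl
        rwa [hfin] at this
      · have := hω 0 (by omega)
        rwa [h0] at this
    have hmono := ENNReal.toReal_mono (measure_ne_top μ _) (measure_mono hsub)
    have hfirst : γ ^ (N ^ 3) * (μ {ω | X 0 ω = x0}).toReal
        ≤ γ ^ (N * T) * (μ {ω | X 0 ω = x0}).toReal := by
      refine mul_le_mul_of_nonneg_right (pow_le_pow_of_le_one hγ.1.le hγ.2 ?_) hμ0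
      calc N * T ≤ N * N ^ 2 := Nat.mul_le_mul_left _ hTN
        _ = N ^ 3 := by ring
    rw [h0] at hb
    exact le_trans hfirst (le_trans hb hmono)
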